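/- There exist constants d₁, d₂, d₃ such that for every n ≥ 1: the Boolean function NotO_n is computed by a nondeterministic quantum OBDD of width d₁, NotSQUARE_n is computed by a nondeterministic quantum OBDD of width d₂, and NotPOWER_n is computed by a nondeterministic quantum OBDD of width d₃. -/

import Mathlib

/-- Number of 1s in a binary string ν ∈ {0,1}^n. -/
def countOnes {n : ℕ} (ν : Fin n → Bool) : ℕ :=
  (Finset.univ.filter (fun i => ν i = true)).card

/-- Number of 0s in a binary string ν ∈ {0,1}^n. -/
def countZeros {n : ℕ} (ν : Fin n → Bool) : ℕ :=
  (Finset.univ.filter (fun i => ν i = false)).card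

/-- Number of 1s among the first `k` bits. -/
def countOnesFirst (k : ℕ) {n : ℕ} (ν : Fin n → Bool) : ℕ :=
  (Finset.univ.filter (fun i : Fin n => (i : ℕ) < k ∧ ν i = true)).card

/-- Number of 0s among the first `k` bits. -/
def countZerosFirst (k : ℕ) {n : ℕ} (ν : Fin n → Bool) : ℕ :=
  (Finset.univ.filter (fun i : Fin n => (i : ℕ) < k ∧ ν i = false)).card

/-- A deterministic OBDD of width `d` on `n` Boolean variables. -/
structure DOBDD (n d : ℕ) where
  ord : Equiv.Perm (Fin n)
  T : Fin n → Bool → Fin d → Fin d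
  start : Fin d
  Accept : Finset (Fin d)

/-- The node reached by a deterministic OBDD after reading all input bits. -/
def DOBDD.run {n d : ℕ} (M : DOBDD n d) (ν : Fin n → Bool) : Fin d :=
  (List.finRange n).foldl (fun v j => M.T j (ν (M.ord j)) v) M.start

def DOBDD.accepts {n d : ℕ} (M : DOBDD n d) (ν : Fin n → Bool) : Prop :=
  M.run ν ∈ M.Accept

/-- A deterministic OBDD computes a total Boolean function. -/
def DOBDD.computes {n d : ℕ} (M : DOBDD n d) (f : (Fin n → Bool) → Bool) : Prop :=
  ∀ ν, M.accepts ν ↔ f ν = true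

/-- A nondeterministic OBDD of width `d` on `n` Boolean variables. -/
structure NOBDD (n d : ℕ) where
  ord : Equiv.Perm (Fin n)
  T : Fin n → Bool → Fin d → Set (Fin d)
  start : Fin d
  Accept : Finset (Fin d)

/-- The set of nodes reachable by a nondeterministic OBDD after reading all input bits. -/
def NOBDD.reach {n d : ℕ} (M : NOBDD n d) (ν : Fin n → Bool) : Set (Fin d) :=
  (List.finRange n).foldl (fun S j => {w | ∃ v ∈ S, w ∈ M.T j (ν (M.ord j)) v}) {M.start}

def NOBDD.accepts {n d : ℕ} (M : NOBDD n d) (ν : Fin n → Bool) : Prop :=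
  ∃ v ∈ M.reach ν, v ∈ M.Accept

/-- A nondeterministic OBDD computes a total Boolean function. -/
def NOBDD.computes {n d : ℕ} (M : NOBDD n d) (f : (Fin n → Bool) → Bool) : Prop :=
  ∀ ν, M.accepts ν ↔ f ν = true

/-- The class of Boolean functions on n variables computed by deterministic
OBDDs of width at most `w`. -/
def OBDDclass (n w : ℕ) : Set ((Fin n → Bool) → Bool) :=
  {f | ∃ d, d ≤ w ∧ ∃ M : DOBDD n d, M.computes f}

/-- The class of Boolean functions on n variables computed by nondeterministic
OBDDs of width at most `w`. -/
def NOBDDclass (n w : ℕ) : Set ((Fin n → Bool) → Bool) :=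
  {f | ∃ d, d ≤ w ∧ ∃ M : NOBDD n d, M.computes f}

/-- Final probability distribution of a stable probabilistic OBDD given by the pair of
left-stochastic matrices `A`, variable order `ord`, and initial node `s`. -/
noncomputable def stableProbRun {n d : ℕ} (A : Bool → Matrix (Fin d) (Fin d) ℝ)
    (ord : Equiv.Perm (Fin n)) (s : Fin d) (ν : Fin n → Bool) : Fin d → ℝ :=
  (List.finRange n).foldl (fun v j => (A (ν (ord j))).mulVec v)
    (fun i => if i = s then 1 else 0)

/-- Final quantum state of a stable ID quantum OBDD given by the pair of matrices `U`
and the initial computational-basis state `q0`, reading bits in the natural order. -/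
noncomputable def quantumRunStable {n d : ℕ} (U : Bool → Matrix (Fin d) (Fin d) ℂ) (q0 : Fin d)
    (ν : Fin n → Bool) : Fin d → ℂ :=
  (List.finRange n).foldl (fun ψ j => (U (ν j)).mulVec ψ)
    (fun i => if i = q0 then 1 else 0)

/-- A quantum OBDD of width `d` on `n` Boolean variables. -/
structure QOBDD (n d : ℕ) where
  ord : Equiv.Perm (Fin n)
  U : Fin n → Bool → Matrix (Fin d) (Fin d) ℂ
  unitary : ∀ j b, U j b ∈ Matrix.unitaryGroup (Fin d) ℂ
  q0 : Fin d
  Accept : Finset (Fin d)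

/-- The final state of a quantum OBDD on input ν. -/
noncomputable def QOBDD.finalState {n d : ℕ} (M : QOBDD n d) (ν : Fin n → Bool) : Fin d → ℂ :=
  (List.finRange n).foldl (fun ψ j => (M.U j (ν (M.ord j))).mulVec ψ)
    (fun i => if i = M.q0 then 1 else 0)

/-- The acceptance probability of a quantum OBDD on input ν. -/
noncomputable def QOBDD.acceptProb {n d : ℕ} (M : QOBDD n d) (ν : Fin n → Bool) : ℝ :=
  ∑ i ∈ M.Accept, Complex.normSq (M.finalState ν i)

/-- `NotO_n(ν) = 0` iff `#0(ν) = #1(ν)`. -/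
def NotO (n : ℕ) (ν : Fin n → Bool) : Bool := !decide (countZeros ν = countOnes ν)

/-- `NotSQUARE_n(ν) = 0` iff `(#0(ν))² = #1(ν)`. -/
def NotSQUARE (n : ℕ) (ν : Fin n → Bool) : Bool := !decide ((countZeros ν) ^ 2 = countOnes ν)

/-- `NotPOWER_n(ν) = 0` iff `2^{#0(ν)} = #1(ν)`. -/
def NotPOWER (n : ℕ) (ν : Fin n → Bool) : Bool := !decide (2 ^ (countZeros ν) = countOnes ν)

/-- `MOD^k_n(ν) = 1` iff `#1(ν) ≡ 0 (mod k)`. -/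
def MODf (n k : ℕ) (ν : Fin n → Bool) : Bool := decide (countOnes ν % k = 0)

/-- `NotO^k_n(ν) = 0` iff `#^k_0(ν) = #^k_1(ν) = k/2`. -/
def NotOk (n k : ℕ) (ν : Fin n → Bool) : Bool :=
  !decide (countZerosFirst k ν = k / 2 ∧ countOnesFirst k ν = k / 2)

/-- The ordered subsequence of value bits `ν_{2i}` (1-indexed, `1 ≤ i ≤ k/2`) whose
marker bit `ν_{2i-1}` equals `b`; `b = false` gives `α(ν)` and `b = true` gives `β(ν)`. -/
def valueSubseq {n : ℕ} (k : ℕ) (b : Bool) (ν : Fin n → Bool) : List Bool :=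
  (List.range (k / 2)).filterMap (fun j =>
    if h : 2 * j + 1 < n then
      if ν ⟨2 * j, by omega⟩ = b then some (ν ⟨2 * j + 1, h⟩) else none
    else none)

/-- `EQS^k_n(ν) = 1` iff `α(ν) = β(ν)`. -/
def EQS (n k : ℕ) (ν : Fin n → Bool) : Bool :=
  decide (valueSubseq k false ν = valueSubseq k true ν)

/-- `NotEQS^k_n(ν) = 1 - EQS^k_n(ν)`. -/
def NotEQS (n k : ℕ) (ν : Fin n → Bool) : Bool := !(EQS n k ν)

/-- There exist constants `d₁, d₂, d₃` such that for every `n ≥ 1`, the Boolean functions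
`NotO_n`, `NotSQUARE_n` and `NotPOWER_n` are computed by nondeterministic quantum OBDDs
of widths `d₁`, `d₂`, `d₃` respectively (acceptance probability positive iff value 1). -/

noncomputable def rot (x : ℝ) : Matrix (Fin 2) (Fin 2) ℂ :=
  !![Real.cos x, -Real.sin x; Real.sin x, Real.cos x]

lemma rot_unitary (x : ℝ) : rot x ∈ Matrix.unitaryGroup (Fin 2) ℂ := by
  rw [Matrix.mem_unitaryGroup_iff]
  ext i j
  fin_cases i <;> fin_cases j <;>
    simp [rot, Matrix.mul_apply, Fin.sum_univ_two, Matrix.one_apply,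
      ← Complex.ofReal_cos, ← Complex.ofReal_sin, Complex.conj_ofReal,
      ← Complex.ofReal_mul, ← Complex.ofReal_add, ← Complex.ofReal_sub, ← Complex.ofReal_one,
      Complex.ofReal_inj] <;>
    first
      | (push_cast; ring1)
      | nlinarith [Real.sin_sq_add_cos_sq x]

lemma rot_zero : rot 0 = 1 := by
  ext i j
  fin_cases i <;> fin_cases j <;> simp [rot, Matrix.one_apply]

lemma rot_mul (x y : ℝ) : rot x * rot y = rot (x + y) := by
  ext i j
  fin_cases i <;> fin_cases j <;>
    simp [rot, Matrix.mul_apply, Fin.sum_univ_two, Real.cos_add, Real.sin_add] <;>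
    push_cast <;> ring

lemma foldl_rot {n : ℕ} (a : Fin n → ℝ) (L : List (Fin n)) (v : Fin 2 → ℂ) :
    L.foldl (fun ψ j => (rot (a j)).mulVec ψ) v = (rot (L.map a).sum).mulVec v := by
  induction L generalizing v with
  | nil => simp [rot_zero]
  | cons j L ih =>
      simp only [List.foldl_cons, ih, Matrix.mulVec_mulVec, rot_mul, List.map_cons, List.sum_cons]
      rw [add_comm]

noncomputable def rotMachine (n c : ℕ) : QOBDD n 2 where
  ord := 1
  U := fun j b => rot ((if b = false then Real.pi * Real.sqrt 2 else 0) +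
        (if (j : ℕ) = 0 then -(c * (Real.pi * Real.sqrt 2)) else 0))
  unitary := fun _ _ => rot_unitary _
  q0 := 0
  Accept := {1}

lemma rotMachine_finalState (n c : ℕ) (ν : Fin n → Bool) :
    (rotMachine n c).finalState ν =
      (rot (∑ j : Fin n, ((if ν j = false then Real.pi * Real.sqrt 2 else 0) +
        (if (j : ℕ) = 0 then -(c * (Real.pi * Real.sqrt 2)) else 0)))).mulVec
        (fun i => if i = 0 then 1 else 0) := by
  simp only [QOBDD.finalState, rotMachine, Equiv.Perm.coe_one, id_eq]
  rw [foldl_rot, Fin.sum_univ_def]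
  rfl

lemma sum_angles (n c : ℕ) (hn : 1 ≤ n) (ν : Fin n → Bool) :
    (∑ j : Fin n, ((if ν j = false then Real.pi * Real.sqrt 2 else 0) +
        (if (j : ℕ) = 0 then -(c * (Real.pi * Real.sqrt 2)) else 0)))
      = ((countZeros ν : ℝ) - c) * (Real.pi * Real.sqrt 2) := by
  rw [Finset.sum_add_distrib]
  have h1 : (∑ j : Fin n, (if ν j = false then Real.pi * Real.sqrt 2 else 0))
      = (countZeros ν : ℝ) * (Real.pi * Real.sqrt 2) := by
    rw [Finset.sum_ite, Finset.sum_const, Finset.sum_const_zero, add_zero, countZeros]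
    simp [nsmul_eq_mul]
  have h2 : (∑ j : Fin n, (if (j : ℕ) = 0 then -((c : ℝ) * (Real.pi * Real.sqrt 2)) else 0))
      = -((c : ℝ) * (Real.pi * Real.sqrt 2)) := by
    have e : ∀ j : Fin n, (if (j : ℕ) = 0 then -((c : ℝ) * (Real.pi * Real.sqrt 2)) else 0)
        = (if j = (⟨0, hn⟩ : Fin n) then -((c : ℝ) * (Real.pi * Real.sqrt 2)) else 0) := by
      intro j
      exact if_congr (by simp [Fin.ext_iff]) rfl rfl
    rw [Finset.sum_congr rfl (fun j _ => e j), Finset.sum_ite_eq' Finset.univ]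
    simp
  rw [h1, h2]
  ring

lemma rotMachine_acceptProb (n c : ℕ) (hn : 1 ≤ n) (ν : Fin n → Bool) :
    (rotMachine n c).acceptProb ν =
      Real.sin (((countZeros ν : ℝ) - c) * (Real.pi * Real.sqrt 2)) ^ 2 := by
  rw [QOBDD.acceptProb]
  have hfs := rotMachine_finalState n c ν
  rw [sum_angles n c hn ν] at hfs
  show ∑ i ∈ (rotMachine n c).Accept, Complex.normSq ((rotMachine n c).finalState ν i) = _
  rw [hfs]
  show ∑ i ∈ ({1} : Finset (Fin 2)), _ = _
  rw [Finset.sum_singleton]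
  simp [rot, Matrix.mulVec, dotProduct, Fin.sum_univ_two, sq,
    ← Complex.ofReal_sin, ← Complex.ofReal_mul, ← Complex.ofReal_sub, Complex.normSq_ofReal]

lemma rotMachine_spec (n c : ℕ) (hn : 1 ≤ n) (ν : Fin n → Bool) :
    0 < (rotMachine n c).acceptProb ν ↔ countZeros ν ≠ c := by
  rw [rotMachine_acceptProb n c hn ν]
  rw [sq_pos_iff]
  constructor
  · intro h hzc
    apply h
    rw [hzc]
    simp
  · intro hzc hsin
    rw [Real.sin_eq_zero_iff] at hsin
    obtain ⟨k, hk⟩ := hsin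
    set q : ℤ := (countZeros ν : ℤ) - c with hq
    have hq0 : q ≠ 0 := by
      simp only [hq, sub_ne_zero]
      exact_mod_cast hzc
    have hcast : ((countZeros ν : ℝ) - c) = (q : ℝ) := by push_cast [hq]; ring
    rw [hcast] at hk
    have hpi : (0:ℝ) < Real.pi := Real.pi_pos
    have : Real.sqrt 2 = (k : ℝ) / (q : ℝ) := by
      have hq0' : (q : ℝ) ≠ 0 := Int.cast_ne_zero.mpr hq0
      field_simp
      nlinarith [hk]
    exact irrational_sqrt_two ⟨(k : ℚ) / (q : ℚ), by push_cast; rw [this]⟩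

lemma countZeros_le {n : ℕ} (ν : Fin n → Bool) : countZeros ν ≤ n := by
  rw [countZeros]
  calc (Finset.univ.filter (fun i => ν i = false)).card ≤ Finset.univ.card :=
        Finset.card_filter_le _ _
    _ = n := by simp

lemma counts_add {n : ℕ} (ν : Fin n → Bool) : countZeros ν + countOnes ν = n := by
  classical
  rw [countZeros, countOnes,
    show (Finset.univ.filter fun i : Fin n => ν i = true)
      = Finset.univ.filter (fun i => ¬ (ν i = false)) from Finset.filter_congr (by simp),
    Finset.card_filter_add_card_filter_not]
  simp

lemma gConst (g : ℕ → ℕ) (hinj : Function.Injective g) (n : ℕ) :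
    ∃ c : ℕ, ∀ z ≤ n, (g z = n ↔ z = c) := by
  by_cases h : ∃ z, g z = n
  · exact ⟨h.choose, fun z _ =>
      ⟨fun hg => hinj (hg.trans h.choose_spec.symm), fun hz' => hz' ▸ h.choose_spec⟩⟩
  · exact ⟨n + 1, fun z hz =>
      ⟨fun hg => absurd ⟨z, hg⟩ h, fun hz' => by omega⟩⟩

theorem notO_notSQUARE_notPOWER_nondeterministic_quantum_constant_width :
    ∃ d₁ d₂ d₃ : ℕ, ∀ n : ℕ, 1 ≤ n →
      (∃ M : QOBDD n d₁, ∀ ν : Fin n → Bool, 0 < M.acceptProb ν ↔ NotO n ν = true) ∧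
      (∃ M : QOBDD n d₂, ∀ ν : Fin n → Bool, 0 < M.acceptProb ν ↔ NotSQUARE n ν = true) ∧
      (∃ M : QOBDD n d₃, ∀ ν : Fin n → Bool, 0 < M.acceptProb ν ↔ NotPOWER n ν = true) := by
  refine ⟨2, 2, 2, fun n hn => ⟨?_, ?_, ?_⟩⟩
  · -- NotO
    obtain ⟨c, hc⟩ := gConst (fun z => 2 * z) (fun a b h => by simpa using h) n
    refine ⟨rotMachine n c, fun ν => ?_⟩
    rw [rotMachine_spec n c hn ν, NotO]
    have h1 := counts_add ν
    have h2 := countZeros_le ν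
    have h3 := hc (countZeros ν) h2
    simp only [Bool.not_eq_true', decide_eq_false_iff_not, ne_eq, not_iff_not]
    rw [← h3]
    omega
  · -- NotSQUARE
    have hinj : Function.Injective (fun z : ℕ => z ^ 2 + z) := by
      have : StrictMono (fun z : ℕ => z ^ 2 + z) := by
        intro a b hab
        have := Nat.pow_lt_pow_left hab (two_ne_zero)
        show a ^ 2 + a < b ^ 2 + b
        omega
      exact this.injective
    obtain ⟨c, hc⟩ := gConst (fun z => z ^ 2 + z) hinj n
    refine ⟨rotMachine n c, fun ν => ?_⟩
    rw [rotMachine_spec n c hn ν, NotSQUARE]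
    have h1 := counts_add ν
    have h2 := countZeros_le ν
    have h3 := hc (countZeros ν) h2
    simp only [Bool.not_eq_true', decide_eq_false_iff_not, ne_eq, not_iff_not]
    rw [← h3]
    omega
  · -- NotPOWER
    have hinj : Function.Injective (fun z : ℕ => 2 ^ z + z) := by
      have : StrictMono (fun z : ℕ => 2 ^ z + z) := by
        intro a b hab
        have := Nat.pow_lt_pow_right (a := 2) (by norm_num) hab
        show 2 ^ a + a < 2 ^ b + b
        omega
      exact this.injective
    obtain ⟨c, hc⟩ := gConst (fun z => 2 ^ z + z) hinj n
    refine ⟨rotMachine n c, fun ν => ?_⟩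
    rw [rotMachine_spec n c hn ν, NotPOWER]
    have h1 := counts_add ν
    have h2 := countZeros_le ν
    have h3 := hc (countZeros ν) h2
    simp only [Bool.not_eq_true', decide_eq_false_iff_not, ne_eq, not_iff_not]
    rw [← h3]
    omega
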